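/- Let (N, A, P) be a decreasing instance of a-GASP where A* consists of k pairwise equivalent copies of one activity, so that each agent i is characterized by a threshold u_i ∈ {0,…,n}: agent i approves (a_j, m) iff m ≤ u_i. Assume u_1 ≥ u_2 ≥ … ≥ u_n. Then the greedy algorithm — which repeatedly takes the unassigned agents in order and forms the largest group {i, i+1, …, i+s−1} of consecutive remaining agents with u_{i+s−1} ≥ s (i.e., all members tolerate the group size), assigning them to a fresh copy, stopping after k groups or when no nonempty group can be formed — produces a maximum individually rational assignment: no individually rational assignment assigns strictly more agents to non-void activities. -/

import Mathlib

/-- The group of agents assigned to activity `a` under assignment `π`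
(`none` stands for the void activity `a_∅`). -/
def grp {ι α : Type*} [Fintype ι] [DecidableEq α] (π : ι → Option α) (a : α) : Finset ι :=
  Finset.univ.filter (fun i => π i = some a)

/-- An assignment is individually rational if every agent assigned to a non-void
activity `a` approves the alternative `(a, size of the group doing a)`.
`S i a` is the set of group sizes `k` such that agent `i` approves `(a, k)`. -/
def IndivRat {ι α : Type*} [Fintype ι] [DecidableEq α]
    (S : ι → α → Finset ℕ) (π : ι → Option α) : Prop :=
  ∀ i a, π i = some a → (grp π a).card ∈ S i a

/-- Nash stability: individual rationality plus no agent assigned to the void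
activity approves joining an existing group. -/
def NashStable {ι α : Type*} [Fintype ι] [DecidableEq α]
    (S : ι → α → Finset ℕ) (π : ι → Option α) : Prop :=
  IndivRat S π ∧ ∀ i a, π i = none → (grp π a).card + 1 ∉ S i a

/-- The number of agents assigned to a non-void activity. -/
def numActive {ι α : Type*} [Fintype ι] [DecidableEq α] (π : ι → Option α) : ℕ :=
  (Finset.univ.filter (fun i => π i ≠ none)).card

/-- The size of the group formed by the greedy algorithm when the (0-indexed)
agents i, i+1, …, n-1 remain, for thresholds u sorted non-increasingly: the
largest s with i + s ≤ n such that the last member tolerates a group of size s. -/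
def greedySize (u : ℕ → ℕ) (n i : ℕ) : ℕ :=
  ((Finset.Icc 1 (n - i)).filter (fun s => s ≤ u (i + s - 1))).sup id

/-- Total number of agents assigned by the greedy algorithm, starting with the
agents i, i+1, …, n-1 unassigned and c copies of the activity remaining. -/
def greedyTotal (u : ℕ → ℕ) (n : ℕ) : ℕ → ℕ → ℕ
  | _, 0 => 0
  | i, c + 1 =>
    if greedySize u n i = 0 then 0
    else greedySize u n i + greedyTotal u n (i + greedySize u n i) c

namespace S9
variable (u : ℕ → ℕ) (n : ℕ)

lemma greedySize_le (i : ℕ) : greedySize u n i ≤ n - i := by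
  apply Finset.sup_le
  intro s hs
  simp only [Finset.mem_filter, Finset.mem_Icc] at hs
  exact hs.1.2

lemma greedySize_spec (i : ℕ) (h : greedySize u n i ≠ 0) :
    1 ≤ greedySize u n i ∧ i + greedySize u n i ≤ n ∧
      greedySize u n i ≤ u (i + greedySize u n i - 1) := by
  set t := (Finset.Icc 1 (n - i)).filter (fun s => s ≤ u (i + s - 1)) with ht
  have hne : t.Nonempty := by
    rcases Finset.eq_empty_or_nonempty t with he | hne
    · exfalso; apply h; simp [greedySize, ← ht, he]
    · exact hne
  obtain ⟨b, hb, heq⟩ := Finset.exists_mem_eq_sup t hne id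
  have hgs : greedySize u n i = b := by simp [greedySize, ← ht, heq]
  simp only [ht, Finset.mem_filter, Finset.mem_Icc] at hb
  rw [hgs]
  refine ⟨hb.1.1, ?_, hb.2⟩
  omega

lemma le_greedySize (i s : ℕ) (h1 : 1 ≤ s) (h2 : i + s ≤ n) (h3 : s ≤ u (i + s - 1)) :
    s ≤ greedySize u n i := by
  refine Finset.le_sup (f := id) ?_
  simp only [Finset.mem_filter, Finset.mem_Icc]
  exact ⟨⟨h1, by omega⟩, h3⟩

lemma gT_zero (i : ℕ) (h : greedySize u n i = 0) : ∀ c, greedyTotal u n i c = 0 := by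
  intro c; cases c <;> simp [greedyTotal, h]

lemma gT_succ (i c : ℕ) :
    greedyTotal u n i (c + 1) =
      greedySize u n i + greedyTotal u n (i + greedySize u n i) c := by
  by_cases h : greedySize u n i = 0
  · simp [greedyTotal, h, gT_zero u n i h]
  · simp [greedyTotal, h]

lemma gT_mono : ∀ c i, greedyTotal u n i c ≤ greedyTotal u n i (c + 1) := by
  intro c
  induction c with
  | zero => intro i; simp [greedyTotal]
  | succ c ih =>
    intro i
    rw [gT_succ, gT_succ]
    exact Nat.add_le_add_left (ih _) _

def Feas (u : ℕ → ℕ) (n : ℕ) : ℕ → List ℕ → Prop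
  | _, [] => True
  | i, s :: L => (s = 0 ∨ (i + s ≤ n ∧ s ≤ u (i + s - 1))) ∧ Feas u n (i + s) L

def trunc : ℕ → List ℕ → List ℕ
  | _, [] => []
  | d, s :: L => (s - d) :: trunc (d - s) L

lemma trunc_length : ∀ d L, (trunc d L).length = L.length := by
  intro d L
  induction L generalizing d with
  | nil => rfl
  | cons s L ih => simp [trunc, ih]

lemma trunc_sum : ∀ L d, (trunc d L).sum = L.sum - d := by
  intro L
  induction L with
  | nil => intro d; simp [trunc]
  | cons s L ih =>
    intro d
    simp only [trunc, List.sum_cons, ih]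
    omega

lemma trunc_feas : ∀ L i d, Feas u n i L → Feas u n (i + d) (trunc d L) := by
  intro L
  induction L with
  | nil => intro i d _; trivial
  | cons s L ih =>
    intro i d hF
    obtain ⟨hh, ht⟩ := hF
    constructor
    · rcases Nat.eq_zero_or_pos (s - d) with h0 | hpos
      · exact Or.inl h0
      · have hs : s ≠ 0 := by omega
        rcases hh with h | ⟨h2, h3⟩
        · omega
        · refine Or.inr ⟨by omega, ?_⟩
          have he : i + d + (s - d) - 1 = i + s - 1 := by omega
          rw [he]
          exact le_trans (by omega) h3
    · have he : i + d + (s - d) = (i + s) + (d - s) := by omega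
      rw [he]
      exact ih (i + s) (d - s) ht

lemma feas_sum_le : ∀ L i, Feas u n i L → L.sum ≤ greedyTotal u n i L.length
  | [], i, _ => by simp
  | s :: L, i, hF => by
    obtain ⟨hh, ht⟩ := hF
    rcases Nat.eq_zero_or_pos s with h0 | hpos
    · subst h0
      simp only [List.sum_cons, Nat.zero_add, List.length_cons]
      calc L.sum ≤ greedyTotal u n i L.length := by
              rw [Nat.add_zero] at ht; exact feas_sum_le L i ht
        _ ≤ greedyTotal u n i (L.length + 1) := gT_mono u n _ i
    · rcases hh with h | ⟨h2, h3⟩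
      · omega
      · have hs : s ≤ greedySize u n i := le_greedySize u n i s hpos h2 h3
        set g := greedySize u n i with hg
        have hT : Feas u n (i + g) (trunc (g - s) L) := by
          have := trunc_feas u n L (i + s) (g - s) ht
          have he : i + s + (g - s) = i + g := by omega
          rwa [he] at this
        have h4 := feas_sum_le (trunc (g - s) L) (i + g) hT
        rw [trunc_sum, trunc_length] at h4
        rw [List.length_cons, gT_succ, List.sum_cons, ← hg]
        omega
termination_by L => L.length
decreasing_by all_goals simp [trunc_length]

lemma feas_of_zero : ∀ L i, (∀ s ∈ L, s = 0) → Feas u n i L := by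
  intro L
  induction L with
  | nil => intro i _; trivial
  | cons s L ih =>
    intro i h
    have hs : s = 0 := h s (by simp)
    exact ⟨Or.inl hs, ih (i + s) (fun b hb => h b (by simp [hb]))⟩

lemma big_elem {m v : ℕ} (B : Finset (Fin n)) (hm : m ≤ B.card) (h0 : 0 < m)
    (hv : ∀ a ∈ B, v ≤ u a) (hu : ∀ i j, i ≤ j → u j ≤ u i) :
    m ≤ n ∧ v ≤ u (m - 1) := by
  have hn : B.card ≤ n := by
    have := Finset.card_le_univ B
    simpa using this
  refine ⟨le_trans hm hn, ?_⟩
  have hex : ∃ a ∈ B, m - 1 ≤ (a : ℕ) := by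
    by_contra hc
    push_neg at hc
    have hsub : B.image Fin.val ⊆ Finset.range (m - 1) := by
      intro x hx
      simp only [Finset.mem_image] at hx
      obtain ⟨a, ha, rfl⟩ := hx
      exact Finset.mem_range.mpr (hc a ha)
    have h1 : B.card ≤ m - 1 := by
      calc B.card = (B.image Fin.val).card :=
            (Finset.card_image_of_injective _ Fin.val_injective).symm
        _ ≤ m - 1 := le_trans (Finset.card_le_card hsub) (by simp)
    omega
  obtain ⟨a, ha, hma⟩ := hex
  exact le_trans (hv a ha) (hu (m - 1) a hma)

lemma sorted_feas (hu : ∀ i j, i ≤ j → u j ≤ u i) :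
    ∀ (L : List ℕ) (i : ℕ), List.Pairwise (fun a b => b ≤ a) L →
    (∀ v, 0 < v → (∃ s ∈ L, v ≤ s) →
      i + (L.filter (fun s => v ≤ s)).sum ≤ n ∧
      v ≤ u (i + (L.filter (fun s => v ≤ s)).sum - 1)) →
    Feas u n i L := by
  intro L
  induction L with
  | nil => intro i _ _; trivial
  | cons s L ih =>
    intro i hsort H
    rw [List.pairwise_cons] at hsort
    obtain ⟨hall, hLs⟩ := hsort
    rcases Nat.eq_zero_or_pos s with h0 | hpos
    · subst h0
      refine ⟨Or.inl rfl, ?_⟩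
      rw [Nat.add_zero]
      exact feas_of_zero u n L i (fun b hb => Nat.le_zero.mp (hall b hb))
    · have hfs : (s :: L).filter (fun t => decide (s ≤ t)) =
          s :: L.filter (fun t => decide (s ≤ t)) := by
        simp [List.filter_cons]
      have Hs := H s hpos ⟨s, by simp, le_refl s⟩
      rw [hfs] at Hs
      simp only [List.sum_cons] at Hs
      set e := (L.filter (fun t => decide (s ≤ t))).sum with he
      refine ⟨Or.inr ⟨by omega, ?_⟩, ?_⟩
      · exact le_trans Hs.2 (hu _ _ (by omega))
      · apply ih (i + s) hLs
        intro v hv hex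
        obtain ⟨b, hb, hvb⟩ := hex
        have hvs : v ≤ s := le_trans hvb (hall b hb)
        have hfv : (s :: L).filter (fun t => decide (v ≤ t)) =
            s :: L.filter (fun t => decide (v ≤ t)) := by
          simp [List.filter_cons, hvs]
        have Hv := H v hv ⟨b, by simp [hb], hvb⟩
        rw [hfv] at Hv
        simp only [List.sum_cons] at Hv
        constructor
        · omega
        · have he2 : i + s + (L.filter (fun t => decide (v ≤ t))).sum - 1 =
              i + (s + (L.filter (fun t => decide (v ≤ t))).sum) - 1 := by omega
          rw [he2]
          exact Hv.2

section part2
variable {n : ℕ} {k : ℕ} (π : Fin n → Option (Fin k))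

lemma grp_disjoint : ∀ c ∈ (Finset.univ : Finset (Fin k)), ∀ c' ∈ Finset.univ,
    c ≠ c' → Disjoint (grp π c) (grp π c') := by
  intro c _ c' _ hne
  rw [Finset.disjoint_left]
  intro a ha ha'
  simp only [grp, Finset.mem_filter] at ha ha'
  exact hne (by rw [ha.2] at ha'; exact Option.some_inj.mp ha'.2)

lemma numActive_eq_sum : numActive π = ∑ c : Fin k, (grp π c).card := by
  have h1 : (Finset.univ.filter (fun i => π i ≠ none)) =
      Finset.univ.biUnion (grp π) := by
    ext a
    simp only [Finset.mem_filter, Finset.mem_biUnion, grp, Finset.mem_univ, true_and]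
    constructor
    · intro h
      obtain ⟨c, hc⟩ := Option.ne_none_iff_exists'.mp h
      exact ⟨c, by simpa using hc⟩
    · rintro ⟨c, hc⟩; simp [hc]
  rw [numActive, h1, Finset.card_biUnion (fun c hc c' hc' h => grp_disjoint π c hc c' hc' h)]
end part2

section part2b
variable {n k : ℕ}

lemma optimality (u : ℕ → ℕ) (hu : ∀ i j, i ≤ j → u j ≤ u i)
    (π : Fin n → Option (Fin k))
    (hIR : ∀ (i : Fin n) (c : Fin k), π i = some c → (grp π c).card ≤ u (i : ℕ)) :
    numActive π ≤ greedyTotal u n 0 k := by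
  classical
  set g : Fin k → ℕ := fun c => (grp π c).card with hg
  set M : Multiset ℕ := Finset.univ.val.map g with hM
  set L : List ℕ := Multiset.sort M (· ≥ ·) with hL
  have hLM : (L : Multiset ℕ) = M := Multiset.sort_eq M _
  have hlen : L.length = k := by
    have : (L : Multiset ℕ).card = M.card := by rw [hLM]
    simpa [hM] using this
  have hsum : L.sum = ∑ c : Fin k, g c := by
    have : (L : Multiset ℕ).sum = M.sum := by rw [hLM]
    simpa [hM, Finset.sum] using this
  have hsort : List.Pairwise (fun a b => b ≤ a) L := by
    have := Multiset.pairwise_sort M (· ≥ ·)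
    rw [hL]
    exact this
  -- the counting hypothesis
  have hH : ∀ v, 0 < v → (∃ s ∈ L, v ≤ s) →
      0 + (L.filter (fun s => v ≤ s)).sum ≤ n ∧
      v ≤ u (0 + (L.filter (fun s => v ≤ s)).sum - 1) := by
    intro v hv hex
    set C : Finset (Fin k) := Finset.univ.filter (fun c => v ≤ g c) with hC
    set B : Finset (Fin n) := C.biUnion (grp π) with hB
    have hBcard : B.card = ∑ c ∈ C, g c :=
      Finset.card_biUnion (fun c hc c' hc' h => grp_disjoint π c (by simp) c' (by simp) h)
    have hfsum : (L.filter (fun s => v ≤ s)).sum = ∑ c ∈ C, g c := by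
      have h1 : ((L.filter (fun s => v ≤ s) : List ℕ) : Multiset ℕ)
          = Multiset.filter (fun s => v ≤ s) M := by
        rw [← hLM]
        simp
      have h2 : Multiset.filter (fun s => v ≤ s) M
          = Multiset.map g (Multiset.filter (fun c => v ≤ g c) Finset.univ.val) := by
        rw [hM, Multiset.filter_map]
        rfl
      have h3 : (L.filter (fun s => v ≤ s)).sum
          = (Multiset.map g (Multiset.filter (fun c => v ≤ g c) Finset.univ.val)).sum := by
        rw [← h2, ← h1]
        simp
      rw [h3]
      rfl
    have hmB : (L.filter (fun s => v ≤ s)).sum ≤ B.card := by rw [hBcard, hfsum]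
    have hm0 : 0 < (L.filter (fun s => v ≤ s)).sum := by
      obtain ⟨s, hs, hvs⟩ := hex
      have : s ∈ L.filter (fun t => decide (v ≤ t)) := by
        rw [List.mem_filter]
        exact ⟨hs, by simpa using hvs⟩
      have := List.single_le_sum (by intro x _; omega) _ this
      omega
    have hvB : ∀ a ∈ B, v ≤ u a := by
      intro a ha
      rw [hB, Finset.mem_biUnion] at ha
      obtain ⟨c, hc, hac⟩ := ha
      rw [hC, Finset.mem_filter] at hc
      have : π a = some c := by simpa [grp, Finset.mem_filter] using hac
      exact le_trans hc.2 (le_trans (hIR a c this) (le_refl _))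
    have := big_elem u n B hmB hm0 hvB hu
    constructor
    · omega
    · simpa using this.2
  have hfeas : Feas u n 0 L := sorted_feas u n hu L 0 hsort hH
  have := feas_sum_le u n L 0 hfeas
  rw [hlen] at this
  rw [numActive_eq_sum, ← hg, ← hsum]
  exact this

end part2b

section part1
variable (u : ℕ → ℕ) (n : ℕ)

def off : ℕ → ℕ
  | 0 => 0
  | j + 1 => off j + greedySize u n (off j)

lemma off_le_n : ∀ j, off u n j ≤ n := by
  intro j
  induction j with
  | zero => simp [off]
  | succ j ih =>
    have := greedySize_le u n (off u n j)
    show off u n j + greedySize u n (off u n j) ≤ n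
    omega

lemma off_mono : Monotone (off u n) :=
  monotone_nat_of_le_succ (fun j => Nat.le_add_right _ _)

lemma gT_off : ∀ c j, greedyTotal u n (off u n j) c = off u n (j + c) - off u n j := by
  intro c
  induction c with
  | zero => intro j; simp [greedyTotal]
  | succ c ih =>
    intro j
    rw [gT_succ]
    have h1 : off u n j + greedySize u n (off u n j) = off u n (j + 1) := rfl
    rw [h1, ih (j + 1)]
    have h2 : off u n (j + 1) ≤ off u n (j + 1 + c) := off_mono u n (by omega)
    have h3 : off u n j ≤ off u n (j + 1) := off_mono u n (by omega)
    have h4 : j + 1 + c = j + (c + 1) := by omega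
    rw [h4] at h2 ⊢
    show greedySize u n (off u n j) + (off u n (j + (c + 1)) - off u n (j + 1)) =
      off u n (j + (c + 1)) - off u n j
    omega

lemma gT_zero_off (k : ℕ) : greedyTotal u n 0 k = off u n k := by
  have := gT_off u n k 0
  simpa [off] using this

variable (k : ℕ)

noncomputable def gπ (n : ℕ) (k : ℕ) : Fin n → Option (Fin k) := fun a =>
  if h : ∃ j : Fin k, off u n j ≤ (a : ℕ) ∧ (a : ℕ) < off u n ((j : ℕ) + 1)
  then some h.choose else none

lemma interval_uniq (a : ℕ) (j j' : Fin k)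
    (h : off u n j ≤ a ∧ a < off u n ((j : ℕ) + 1))
    (h' : off u n j' ≤ a ∧ a < off u n ((j' : ℕ) + 1)) : j = j' := by
  rcases lt_trichotomy (j : ℕ) (j' : ℕ) with hlt | heq | hgt
  · exfalso
    have : off u n ((j : ℕ) + 1) ≤ off u n j' := off_mono u n (by omega)
    omega
  · exact Fin.ext heq
  · exfalso
    have : off u n ((j' : ℕ) + 1) ≤ off u n j := off_mono u n (by omega)
    omega

lemma gπ_eq_some (a : Fin n) (j : Fin k) :
    gπ u n k a = some j ↔ (off u n j ≤ (a : ℕ) ∧ (a : ℕ) < off u n ((j : ℕ) + 1)) := by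
  constructor
  · intro h
    rw [gπ] at h
    split at h
    · rename_i hex
      have hspec := hex.choose_spec
      rw [Option.some_inj] at h
      rwa [h] at hspec
    · exact absurd h (by simp)
  · intro h
    have hex : ∃ j : Fin k, off u n j ≤ (a : ℕ) ∧ (a : ℕ) < off u n ((j : ℕ) + 1) := ⟨j, h⟩
    rw [gπ, dif_pos hex, Option.some_inj]
    exact interval_uniq u n k a _ _ hex.choose_spec h

lemma card_interval (p q : ℕ) (hq : q ≤ n) :
    (Finset.univ.filter fun a : Fin n => p ≤ (a : ℕ) ∧ (a : ℕ) < q).card = q - p := by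
  have himg : (Finset.univ.filter fun a : Fin n => p ≤ (a : ℕ) ∧ (a : ℕ) < q).image Fin.val
      = Finset.Ico p q := by
    ext m
    simp only [Finset.mem_image, Finset.mem_filter, Finset.mem_univ, true_and, Finset.mem_Ico]
    constructor
    · rintro ⟨a, ha, rfl⟩; exact ha
    · rintro ⟨h1, h2⟩
      exact ⟨⟨m, lt_of_lt_of_le h2 hq⟩, ⟨h1, h2⟩, rfl⟩
  calc (Finset.univ.filter fun a : Fin n => p ≤ (a : ℕ) ∧ (a : ℕ) < q).card
      = ((Finset.univ.filter fun a : Fin n => p ≤ (a : ℕ) ∧ (a : ℕ) < q).image Fin.val).card :=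
        (Finset.card_image_of_injective _ Fin.val_injective).symm
    _ = q - p := by rw [himg, Nat.card_Ico]

lemma grp_gπ_card (j : Fin k) :
    (grp (gπ u n k) j).card = off u n ((j : ℕ) + 1) - off u n j := by
  have : grp (gπ u n k) j
      = Finset.univ.filter fun a : Fin n => off u n j ≤ (a : ℕ) ∧ (a : ℕ) < off u n ((j : ℕ) + 1) := by
    ext a
    simp only [grp, Finset.mem_filter, Finset.mem_univ, true_and]
    exact gπ_eq_some u n k a j
  rw [this, card_interval n _ _ (off_le_n u n _)]

lemma gπ_IR (hu : ∀ i j, i ≤ j → u j ≤ u i) (a : Fin n) (j : Fin k)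
    (h : gπ u n k a = some j) : (grp (gπ u n k) j).card ≤ u (a : ℕ) := by
  rw [gπ_eq_some] at h
  rw [grp_gπ_card]
  set i := off u n (j : ℕ) with hi
  have hoff : off u n ((j : ℕ) + 1) = i + greedySize u n i := rfl
  rw [hoff] at h ⊢
  have hpos : greedySize u n i ≠ 0 := by omega
  obtain ⟨h1, h2, h3⟩ := greedySize_spec u n i hpos
  calc i + greedySize u n i - i = greedySize u n i := by omega
    _ ≤ u (i + greedySize u n i - 1) := h3
    _ ≤ u (a : ℕ) := hu _ _ (by omega)

lemma exists_block : ∀ (K m : ℕ), m < off u n K →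
    ∃ j, j < K ∧ off u n j ≤ m ∧ m < off u n (j + 1) := by
  intro K
  induction K with
  | zero => intro m h; simp [off] at h
  | succ K ih =>
    intro m h
    by_cases hm : m < off u n K
    · obtain ⟨j, hj, h1, h2⟩ := ih m hm
      exact ⟨j, by omega, h1, h2⟩
    · exact ⟨K, by omega, by omega, h⟩

lemma gπ_numActive : numActive (gπ u n k) = off u n k := by
  have h1 : (Finset.univ.filter (fun a : Fin n => gπ u n k a ≠ none))
      = Finset.univ.filter fun a : Fin n => 0 ≤ (a : ℕ) ∧ (a : ℕ) < off u n k := by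
    ext a
    simp only [Finset.mem_filter, Finset.mem_univ, true_and, Nat.zero_le]
    constructor
    · intro h
      obtain ⟨j, hj⟩ := Option.ne_none_iff_exists'.mp h
      rw [gπ_eq_some] at hj
      have : off u n ((j : ℕ) + 1) ≤ off u n k := off_mono u n (by omega)
      omega
    · intro h
      obtain ⟨j, hjk, hj1, hj2⟩ := exists_block u n k (a : ℕ) (by omega)
      have : gπ u n k a = some ⟨j, hjk⟩ := by
        rw [gπ_eq_some]; exact ⟨hj1, hj2⟩
      simp [this]
  rw [numActive, h1, card_interval n 0 _ (off_le_n u n k)]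
  omega

end part1

end S9

/-- Decreasing a-GASP with k pairwise equivalent copies of one activity, agent i
(0-indexed) approving exactly the group sizes 1, …, u i, with
u 0 ≥ u 1 ≥ … ≥ u (n-1): the greedy algorithm produces a maximum individually
rational assignment, i.e. its number of active agents, greedyTotal u n 0 k, is
achieved by some individually rational assignment, and no individually rational
assignment assigns more agents to non-void activities. -/
theorem stmt9 (n k : ℕ) (u : ℕ → ℕ) (hu : ∀ i j, i ≤ j → u j ≤ u i)
    (hun : ∀ i, u i ≤ n) :
    (∃ π : Fin n → Option (Fin k),
        (∀ (i : Fin n) (c : Fin k), π i = some c → (grp π c).card ≤ u (i : ℕ)) ∧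
        numActive π = greedyTotal u n 0 k) ∧
      ∀ π : Fin n → Option (Fin k),
        (∀ (i : Fin n) (c : Fin k), π i = some c → (grp π c).card ≤ u (i : ℕ)) →
        numActive π ≤ greedyTotal u n 0 k := by
  constructor
  · refine ⟨S9.gπ u n k, fun a j h => S9.gπ_IR u n k hu a j h, ?_⟩
    rw [S9.gπ_numActive, S9.gT_zero_off]
  · intro π hIR
    exact S9.optimality u hu π hIR
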